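/- Let φ be a unit vector in a finite-dimensional Hilbert space H, and φ⊥ a unit vector orthogonal to φ. Write a unit vector ψ = αφ + βφ⊥. Let Π_S be the orthogonal projection onto the permutation-symmetric subspace of H^{⊗(n+1)}. Then ⟨ψ ⊗ φ^{⊗n}, Π_S (ψ ⊗ φ^{⊗n})⟩ = |α|² + |β|²/(n+1). -/

import Mathlib

noncomputable section

/-- The `n`-fold tensor power `H^{⊗n}` of `H = ℂ^d`, realized concretely as
`EuclideanSpace ℂ (Fin n → Fin d)`. -/
abbrev TPow (d n : ℕ) := EuclideanSpace ℂ (Fin n → Fin d)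

/-- The permutation-symmetric subspace of `H^{⊗n}`: vectors invariant under all
permutations of the tensor factors. -/
def SymSub (d n : ℕ) : Submodule ℂ (TPow d n) where
  carrier := {v | ∀ σ : Equiv.Perm (Fin n), ∀ f : Fin n → Fin d, v (f ∘ σ) = v f}
  add_mem' := by
    intro a b ha hb σ f
    show a (f ∘ σ) + b (f ∘ σ) = a f + b f
    rw [ha σ f, hb σ f]
  zero_mem' := by intro σ f; rfl
  smul_mem' := by
    intro c v hv σ f
    show c * v (f ∘ σ) = c * v f
    rw [hv σ f]

/-- The state `ψ ⊗ φ^{⊗n}` in `H^{⊗(n+1)}`: `ψ` on factor `0`, `φ` on each of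
the remaining `n` factors. -/
def onePlusPow {d n : ℕ} (ψ φ : EuclideanSpace ℂ (Fin d)) : TPow d (n + 1) :=
  WithLp.toLp 2 (fun f => ψ (f 0) * ∏ i : Fin n, φ (f i.succ))

/-- elementary tensor -/
def etens {d m : ℕ} (g : Fin m → EuclideanSpace ℂ (Fin d)) : TPow d m :=
  WithLp.toLp 2 (fun f => ∏ i, g i (f i))

lemma inner_etens {d m : ℕ} (g h : Fin m → EuclideanSpace ℂ (Fin d)) :
    (inner ℂ (etens g) (etens h) : ℂ) = ∏ i, (inner ℂ (g i) (h i) : ℂ) := by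
  simp only [PiLp.inner_apply, RCLike.inner_apply', etens]
  rw [Fintype.prod_sum (fun i x => (starRingEnd ℂ) (g i x) * h i x)]
  congr 1; funext f
  rw [map_prod, ← Finset.prod_mul_distrib]

def chi {d n : ℕ} (φ φp : EuclideanSpace ℂ (Fin d)) (k : Fin (n+1)) : TPow d (n+1) :=
  etens (fun i => if i = k then φp else φ)

lemma chi_comp {d n : ℕ} (φ φp : EuclideanSpace ℂ (Fin d)) (k : Fin (n+1))
    (σ : Equiv.Perm (Fin (n+1))) (f : Fin (n+1) → Fin d) :
    chi φ φp k (f ∘ σ) = chi φ φp (σ k) f := by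
  simp only [chi, etens]
  exact Fintype.prod_equiv σ _ _ (fun i => by simp [Equiv.apply_eq_iff_eq])

/-- For a unit vector `ψ = αφ + βφ⊥` and `Π_S` the orthogonal
projection onto the symmetric subspace of `H^{⊗(n+1)}`,
`⟨ψ ⊗ φ^{⊗n}, Π_S (ψ ⊗ φ^{⊗n})⟩ = |α|² + |β|²/(n+1)`. -/
theorem stmt_13 (d n : ℕ) (φ φp ψ : EuclideanSpace ℂ (Fin d)) (α β : ℂ)
    (hφ : ‖φ‖ = 1) (hφp : ‖φp‖ = 1) (horth : inner ℂ φ φp = (0 : ℂ))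
    (hψ : ψ = α • φ + β • φp) (hnorm : ‖α‖ ^ 2 + ‖β‖ ^ 2 = 1) :
    inner ℂ (onePlusPow ψ φ)
        ((Submodule.orthogonalProjectionOnto (SymSub d (n + 1)) (onePlusPow ψ φ) : TPow d (n + 1)))
      = ((‖α‖ ^ 2 + ‖β‖ ^ 2 / (n + 1) : ℝ) : ℂ) := by
  classical
  -- basic inner products
  have hφφ : (inner ℂ φ φ : ℂ) = 1 := by
    rw [inner_self_eq_norm_sq_to_K, hφ]; norm_num
  have hpp : (inner ℂ φp φp : ℂ) = 1 := by
    rw [inner_self_eq_norm_sq_to_K, hφp]; norm_num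
  have horth' : (inner ℂ φp φ : ℂ) = 0 := by
    rw [← inner_conj_symm, horth, map_zero]
  set Φ : TPow d (n+1) := etens (fun _ : Fin (n+1) => φ) with hΦdef
  set χ : Fin (n+1) → TPow d (n+1) := chi φ φp with hχdef
  set S : TPow d (n+1) := ∑ k, χ k with hSdef
  -- inner products among Φ and χ's
  have hinnerΦΦ : (inner ℂ Φ Φ : ℂ) = 1 := by
    rw [hΦdef, inner_etens]; simp [hφφ, hφ]
  have hinnerΦχ : ∀ k, (inner ℂ Φ (χ k) : ℂ) = 0 := by
    intro k
    rw [hΦdef, hχdef, chi, inner_etens]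
    refine Finset.prod_eq_zero (Finset.mem_univ k) ?_
    simp [horth]
  have hinnerχΦ : ∀ k, (inner ℂ (χ k) Φ : ℂ) = 0 := by
    intro k
    rw [hΦdef, hχdef, chi, inner_etens]
    refine Finset.prod_eq_zero (Finset.mem_univ k) ?_
    simp [horth']
  have hinnerχχ : ∀ j k, (inner ℂ (χ j) (χ k) : ℂ) = if j = k then 1 else 0 := by
    intro j k
    rw [hχdef, chi, chi, inner_etens]
    by_cases hjk : j = k
    · subst hjk
      simp only [if_pos rfl]
      refine Finset.prod_eq_one (fun i _ => ?_)
      by_cases h : i = j <;> simp [h, hφφ, hpp, hφ, hφp]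
    · rw [if_neg hjk]
      refine Finset.prod_eq_zero (Finset.mem_univ j) ?_
      simp [hjk, horth']
  -- decompose the state
  have hv : onePlusPow ψ φ = α • Φ + β • χ 0 := by
    ext f
    have hΦf : Φ f = φ (f 0) * ∏ i : Fin n, φ (f i.succ) := by
      rw [hΦdef]; exact Fin.prod_univ_succ _
    have hχf : χ 0 f = φp (f 0) * ∏ i : Fin n, φ (f i.succ) := by
      rw [hχdef]
      show ∏ i : Fin (n+1), (if i = 0 then φp else φ) (f i) = _
      rw [Fin.prod_univ_succ]
      simp [Fin.succ_ne_zero]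
    show onePlusPow ψ φ f = α * Φ f + β * χ 0 f
    rw [onePlusPow, hψ, hΦf, hχf]
    show (α * φ (f 0) + β * φp (f 0)) * _ = _
    ring
  -- membership
  have hΦmem : Φ ∈ SymSub d (n+1) := by
    intro σ f
    rw [hΦdef]
    exact Fintype.prod_equiv σ _ _ (fun i => rfl)
  have hSmem : S ∈ SymSub d (n+1) := by
    intro σ f
    rw [hSdef]
    have h1 : (∑ k, χ k) (f ∘ σ) = ∑ k, χ k (f ∘ σ) := by
      rw [WithLp.ofLp_sum, Finset.sum_apply]
    have h2 : (∑ k, χ k) f = ∑ k, χ k f := by rw [WithLp.ofLp_sum, Finset.sum_apply]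
    rw [h1, h2]
    rw [Fintype.sum_equiv σ _ _ (fun k => ?_)]
    rw [hχdef, chi_comp]
  set w : TPow d (n+1) := α • Φ + (β / (n+1)) • S with hwdef
  have hwmem : w ∈ SymSub d (n+1) :=
    Submodule.add_mem _ (Submodule.smul_mem _ _ hΦmem) (Submodule.smul_mem _ _ hSmem)
  -- for symmetric u, ⟨u, χ k⟩ = ⟨u, χ 0⟩
  have hkey : ∀ u ∈ SymSub d (n+1), ∀ k, (inner ℂ u (χ k) : ℂ) = inner ℂ u (χ 0) := by
    intro u hu k
    have hσ := Equiv.swap 0 k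
    simp only [PiLp.inner_apply, RCLike.inner_apply']
    refine Fintype.sum_equiv (Equiv.arrowCongr (Equiv.swap 0 k) (Equiv.refl (Fin d))).symm _ _
      (fun f => ?_)
    have hfs : ((Equiv.arrowCongr (Equiv.swap 0 k) (Equiv.refl (Fin d))).symm f) = f ∘ (Equiv.swap 0 k) := by
      funext i; simp [Equiv.arrowCongr]
    rw [hfs, hu (Equiv.swap 0 k) f, hχdef, chi_comp]
    simp
  -- the projection equals w
  have hproj : ((Submodule.orthogonalProjectionOnto (SymSub d (n+1)) (onePlusPow ψ φ)) : TPow d (n+1)) = w := by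
    rw [← Submodule.starProjection_apply]
    apply Submodule.eq_starProjection_of_mem_of_inner_eq_zero hwmem
    intro u hu
    have hd : onePlusPow ψ φ - w = β • χ 0 - (β / (n+1)) • S := by
      rw [hv, hwdef]; abel
    rw [← inner_conj_symm, map_eq_zero_iff _ (starRingEnd ℂ).injective]
    rw [hd, inner_sub_right, inner_smul_right, inner_smul_right, hSdef,
      inner_sum]
    rw [Finset.sum_congr rfl (fun k _ => hkey u hu k)]
    rw [Finset.sum_const, Finset.card_univ, Fintype.card_fin]
    have hne : ((n:ℂ)+1) ≠ 0 := Nat.cast_add_one_ne_zero n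
    field_simp
    ring
  rw [hproj, hv]
  rw [inner_add_left, inner_smul_left, inner_smul_left, hwdef,
    inner_add_right, inner_add_right, inner_smul_right, inner_smul_right,
    inner_smul_right, inner_smul_right, hinnerΦΦ, hinnerχΦ, hSdef, inner_sum, inner_sum]
  simp only [hinnerΦχ, hinnerχχ, Finset.sum_const, Finset.smul_sum]
  rw [Finset.sum_ite_eq Finset.univ (0 : Fin (n+1)) (fun _ => (1:ℂ))]
  simp only [Finset.mem_univ, if_pos, Finset.sum_const, smul_zero, mul_zero, mul_one, add_zero, zero_add, Finset.sum_const_zero]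
  have hα : (starRingEnd ℂ) α * α = (‖α‖^2 : ℝ) := by
    rw [RCLike.conj_mul]; norm_cast
  have hβ : (starRingEnd ℂ) β * β = (‖β‖^2 : ℝ) := by
    rw [RCLike.conj_mul]; norm_cast
  push_cast
  rw [mul_comm ((starRingEnd ℂ) β) (β / (↑n+1)), div_mul_eq_mul_div, mul_comm β, hβ, hα]
  push_cast
  ring
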